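/- Every subgroup G of GL₂(Z/3Z) that (i) satisfies λ₂(λ₃(G)) = {e}, (ii) has surjective determinant onto (Z/3Z)^×, and (iii) contains an element of trace 0 and determinant −1, is conjugate in GL₂(Z/3Z) to a subgroup of the split Cartan subgroup (the subgroup of diagonal matrices). -/

import Mathlib

set_option maxRecDepth 100000
set_option synthInstance.maxHeartbeats 1000000
set_option synthInstance.maxSize 2000
set_option maxHeartbeats 2000000

open Matrix
open scoped commutatorElement

abbrev M2 := Matrix (Fin 2) (Fin 2) (ZMod 3)

def Dm : M2 := !![1, 0; 0, -1]

def Bdef (A : M2) : M2 := A.det • !![A 1 1, -(A 0 1); -(A 1 0), A 0 0]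

theorem L1 : ∀ A : M2, Matrix.trace A = 0 → Matrix.det A = -1 → A * A = 1 := by decide

theorem Linv : ∀ A : M2, Matrix.det A ≠ 0 → A * Bdef A = 1 ∧ Bdef A * A = 1 := by decide

theorem L2 : ∀ A : M2, Matrix.trace A = 0 → Matrix.det A = -1 →
    ∃ C : M2, Matrix.det C ≠ 0 ∧ C * A * Bdef C = Dm := by decide

theorem L3 : ∀ A : M2, Matrix.det A ≠ 0 →
    (A * A * A) * (A * A * A) = 1 → Dm * (A * A * A) = (A * A * A) * Dm →
    (Dm * A * Dm * Bdef A) * (Dm * A * Dm * Bdef A) = 1 →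
    Dm * (Dm * A * Dm * Bdef A) = (Dm * A * Dm * Bdef A) * Dm →
    A 0 1 = 0 ∧ A 1 0 = 0 := by decide

/-- `lam r G = [G,G] G^r`, the subgroup generated by commutators and `r`-th powers. -/
def lam (r : ℕ) (G : Type*) [Group G] : Subgroup G :=
  commutator G ⊔ Subgroup.closure {x : G | ∃ g : G, x = g ^ r}

/-- Every subgroup of `GL₂(ℤ/3ℤ)` satisfying `λ₂(λ₃(G)) = {e}`, with surjective
determinant and containing an element of trace `0` and determinant `−1`, is conjugate
to a subgroup of the diagonal (split Cartan) subgroup. -/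
theorem stmt_17 (G : Subgroup (GL (Fin 2) (ZMod 3)))
    (h1 : lam 2 ↥(lam 3 ↥G) = ⊥)
    (h2 : ∀ u : (ZMod 3)ˣ, ∃ g ∈ G, Matrix.GeneralLinearGroup.det g = u)
    (h3 : ∃ g ∈ G, Matrix.trace (g : Matrix (Fin 2) (Fin 2) (ZMod 3)) = 0 ∧
      Matrix.det (g : Matrix (Fin 2) (Fin 2) (ZMod 3)) = -1) :
    ∃ c : GL (Fin 2) (ZMod 3), ∀ g ∈ G, ∀ i j : Fin 2, i ≠ j →
      ((c * g * c⁻¹ : GL (Fin 2) (ZMod 3)) : Matrix (Fin 2) (Fin 2) (ZMod 3)) i j = 0 := by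
  obtain ⟨g0, hg0G, htr, hdet⟩ := h3
  -- g0 is an involution
  have hg0sq : g0 * g0 = 1 := by
    apply Units.ext
    rw [Units.val_mul, Units.val_one]
    exact L1 _ htr hdet
  have hg0inv : g0⁻¹ = g0 := inv_eq_of_mul_eq_one_right hg0sq
  -- the conjugator
  obtain ⟨C, hCdet, hCA⟩ := L2 _ htr hdet
  obtain ⟨hC1, hC2⟩ := Linv C hCdet
  refine ⟨⟨C, Bdef C, hC1, hC2⟩, ?_⟩
  set c : GL (Fin 2) (ZMod 3) := ⟨C, Bdef C, hC1, hC2⟩ with hc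
  intro g hgG i j hij
  -- facts from h1 : lam 2 (lam 3 G) = ⊥
  have hsq : ∀ u : ↥(lam 3 ↥G), u * u = 1 := by
    intro u
    have hm : u * u ∈ lam 2 ↥(lam 3 ↥G) :=
      Subgroup.mem_sup_right (Subgroup.subset_closure ⟨u, by rw [pow_two]⟩)
    rw [h1] at hm
    exact hm
  have hcommH : ∀ u v : ↥(lam 3 ↥G), u * v = v * u := by
    intro u v
    have hm : ⁅u, v⁆ ∈ lam 2 ↥(lam 3 ↥G) :=
      Subgroup.mem_sup_left
        (Subgroup.commutator_mem_commutator (Subgroup.mem_top u) (Subgroup.mem_top v))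
    rw [h1] at hm
    exact commutatorElement_eq_one_iff_mul_comm.mp hm
  -- elements of G
  set x0 : ↥G := ⟨g0, hg0G⟩ with hx0
  set x : ↥G := ⟨g, hgG⟩ with hx
  have hx0cube : x0 = x0 ^ 3 := by
    apply Subtype.ext
    rw [SubmonoidClass.coe_pow]
    show g0 = g0 ^ 3
    rw [pow_succ, pow_two, hg0sq, one_mul]
  have hx0mem : x0 ∈ lam 3 ↥G := by
    rw [hx0cube]
    exact Subgroup.mem_sup_right (Subgroup.subset_closure ⟨x0, rfl⟩)
  have hx3mem : x * x * x ∈ lam 3 ↥G :=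
    Subgroup.mem_sup_right (Subgroup.subset_closure ⟨x, by rw [pow_succ, pow_two]⟩)
  have hcmem : ⁅x0, x⁆ ∈ lam 3 ↥G :=
    Subgroup.mem_sup_left
      (Subgroup.commutator_mem_commutator (Subgroup.mem_top x0) (Subgroup.mem_top x))
  -- push facts down to GL level
  have e1 : g0 * (g * g * g) = (g * g * g) * g0 := by
    have h := hcommH ⟨x0, hx0mem⟩ ⟨x * x * x, hx3mem⟩
    have h' := congrArg (Subtype.val ∘ Subtype.val) h
    simpa [hx0, hx] using h'
  have e2 : (g * g * g) * (g * g * g) = 1 := by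
    have h := hsq ⟨x * x * x, hx3mem⟩
    have h' := congrArg (Subtype.val ∘ Subtype.val) h
    simpa [hx] using h'
  have e3 : ⁅g0, g⁆ * ⁅g0, g⁆ = 1 := by
    have h := hsq ⟨⁅x0, x⁆, hcmem⟩
    have h' := congrArg (Subtype.val ∘ Subtype.val) h
    simpa [hx0, hx, commutatorElement_def] using h'
  have e4 : g0 * ⁅g0, g⁆ = ⁅g0, g⁆ * g0 := by
    have h := hcommH ⟨x0, hx0mem⟩ ⟨⁅x0, x⁆, hcmem⟩
    have h' := congrArg (Subtype.val ∘ Subtype.val) h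
    simpa [hx0, hx, commutatorElement_def] using h'
  -- conjugate everything by c
  set φ : GL (Fin 2) (ZMod 3) ≃* GL (Fin 2) (ZMod 3) := MulAut.conj c with hφ
  have F1 : φ g0 * (φ g * φ g * φ g) = (φ g * φ g * φ g) * φ g0 := by
    simp only [← _root_.map_mul]
    rw [e1]
  have F2 : (φ g * φ g * φ g) * (φ g * φ g * φ g) = 1 := by
    simp only [← _root_.map_mul]
    rw [e2, _root_.map_one]
  have F3 : ⁅φ g0, φ g⁆ * ⁅φ g0, φ g⁆ = 1 := by
    simp only [← map_commutatorElement, ← _root_.map_mul]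
    rw [e3, _root_.map_one]
  have F4 : φ g0 * ⁅φ g0, φ g⁆ = ⁅φ g0, φ g⁆ * φ g0 := by
    simp only [← map_commutatorElement, ← _root_.map_mul]
    rw [e4]
  -- matrix values
  have hφg0 : ((φ g0 : GL (Fin 2) (ZMod 3)) : M2) = Dm := by
    show ((c * g0 * c⁻¹ : GL (Fin 2) (ZMod 3)) : M2) = Dm
    rw [Units.val_mul, Units.val_mul]
    exact hCA
  have hφg0inv : ((φ g0)⁻¹ : GL (Fin 2) (ZMod 3)) = φ g0 := by
    rw [← _root_.map_inv, hg0inv]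
  set A : M2 := ((φ g : GL (Fin 2) (ZMod 3)) : M2) with hA
  set Bv : M2 := (((φ g)⁻¹ : GL (Fin 2) (ZMod 3)) : M2) with hB
  have hAB : A * Bv = 1 := by
    rw [hA, hB, ← Units.val_mul, mul_inv_cancel, Units.val_one]
  have hBA : Bv * A = 1 := by
    rw [hA, hB, ← Units.val_mul, inv_mul_cancel, Units.val_one]
  have hdetA : Matrix.det A ≠ 0 := by
    intro h0
    have : Matrix.det A * Matrix.det Bv = 1 := by rw [← Matrix.det_mul, hAB, Matrix.det_one]
    rw [h0, zero_mul] at this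
    exact zero_ne_one this
  have hBv : Bv = Bdef A := by
    obtain ⟨hi1, hi2⟩ := Linv A hdetA
    calc Bv = (Bdef A * A) * Bv := by rw [hi2, one_mul]
    _ = Bdef A * (A * Bv) := by rw [mul_assoc]
    _ = Bdef A := by rw [hAB, mul_one]
  -- the commutator value
  have hK : ((⁅φ g0, φ g⁆ : GL (Fin 2) (ZMod 3)) : M2) = Dm * A * Dm * Bdef A := by
    rw [commutatorElement_def, hφg0inv]
    rw [Units.val_mul, Units.val_mul, Units.val_mul, hφg0, ← hA, ← hB, hBv]
  -- assemble matrix-level hypotheses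
  have m1 : Dm * (A * A * A) = (A * A * A) * Dm := by
    have := congrArg Units.val F1
    simpa [Units.val_mul, hφg0, ← hA, mul_assoc] using this
  have m2 : (A * A * A) * (A * A * A) = 1 := by
    have := congrArg Units.val F2
    simpa [Units.val_mul, ← hA, mul_assoc] using this
  have m3 : (Dm * A * Dm * Bdef A) * (Dm * A * Dm * Bdef A) = 1 := by
    have := congrArg Units.val F3
    rw [Units.val_mul, hK, Units.val_one] at this
    exact this
  have m4 : Dm * (Dm * A * Dm * Bdef A) = (Dm * A * Dm * Bdef A) * Dm := by
    have := congrArg Units.val F4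
    rw [Units.val_mul, Units.val_mul, hK, hφg0] at this
    exact this
  obtain ⟨hA01, hA10⟩ := L3 A hdetA m2 m1 m3 m4
  have hgoal : ((c * g * c⁻¹ : GL (Fin 2) (ZMod 3)) : M2) = A := by
    rw [hA, hφ]
    rw [MulAut.conj_apply]
  rw [hgoal]
  fin_cases i <;> fin_cases j
  · exact absurd rfl hij
  · exact hA01
  · exact hA10
  · exact absurd rfl hij
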